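/- Let γ : ℝ → ℝⁿ be a 1-periodic C¹ curve with |γ'(x)| = 1 for all x, and let h : ℝ → ℝⁿ be 1-periodic and C¹ with ⟨γ'(x), h'(x)⟩ = 0 for all x. Then for all x ∈ ℝ and w ∈ (−1/2,1/2): ⟨ h(x+w) − h(x) − h'(x)·⟨γ'(x), γ(x+w) − γ(x)⟩ , γ'(x) ⟩ = w · ∫₀¹ ⟨ h'(x+θw), γ'(x) − γ'(x+θw) ⟩ dθ. -/

import Mathlib

open MeasureTheory
open scoped RealInnerProductSpace

/-- For an arclength curve `γ` and a perturbation `h` with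
`⟨γ', h'⟩ ≡ 0`, the tangential part of `L_γ h` satisfies
`⟨Δ_w h(x) − ⟨γ'(x), Δ_w γ(x)⟩ h'(x), γ'(x)⟩
  = w ∫₀¹ ⟨h'(x+θw), γ'(x) − γ'(x+θw)⟩ dθ`. -/
theorem stmt6 {n : ℕ} (hn : 2 ≤ n)
    (γ γ' h h' : ℝ → EuclideanSpace ℝ (Fin n))
    (hγd : ∀ x, HasDerivAt γ (γ' x) x) (hγc : Continuous γ')
    (hγper : ∀ x, γ (x + 1) = γ x)
    (harc : ∀ x, ‖γ' x‖ = 1)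
    (hhd : ∀ x, HasDerivAt h (h' x) x) (hhc : Continuous h')
    (hhper : ∀ x, h (x + 1) = h x)
    (horth : ∀ x, ⟪γ' x, h' x⟫ = 0)
    (x w : ℝ) (hw : w ∈ Set.Ioo (-(1:ℝ)/2) (1/2)) :
    ⟪h (x + w) - h x - ⟪γ' x, γ (x + w) - γ x⟫ • h' x, γ' x⟫
      = w * ∫ θ in (0:ℝ)..1, ⟪h' (x + θ * w), γ' x - γ' (x + θ * w)⟫ := by
  have h0 : ⟪h' x, γ' x⟫ = 0 := by rw [real_inner_comm]; exact horth x
  -- the function f θ = ⟪γ' x, h (x + θ w)⟫ and its derivative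
  set f : ℝ → ℝ := fun θ => ⟪γ' x, h (x + θ * w)⟫ with hf
  have key : ∀ θ : ℝ, HasDerivAt f (w * ⟪γ' x, h' (x + θ * w)⟫) θ := by
    intro θ
    have h1 : HasDerivAt (fun θ : ℝ => x + θ * w) w θ := by
      simpa using ((hasDerivAt_id θ).mul_const w).const_add x
    have h2 : HasDerivAt (fun θ : ℝ => h (x + θ * w)) (w • h' (x + θ * w)) θ := by
      simpa [Function.comp_def] using (hhd (x + θ * w)).scomp θ h1
    have h3 := ((innerSL ℝ (γ' x)).hasFDerivAt.comp_hasDerivAt θ h2)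
    rw [hf]; simpa [real_inner_smul_right, Function.comp_def] using h3
  have hcont : Continuous fun θ : ℝ => w * ⟪γ' x, h' (x + θ * w)⟫ := by
    exact continuous_const.mul
      ((continuous_const.inner (hhc.comp (by continuity))))
  have hint : ∫ θ in (0:ℝ)..1, w * ⟪γ' x, h' (x + θ * w)⟫ = f 1 - f 0 :=
    intervalIntegral.integral_eq_sub_of_hasDerivAt (fun θ _ => key θ)
      (hcont.intervalIntegrable 0 1)
  have hrhs : ∀ θ : ℝ, ⟪h' (x + θ * w), γ' x - γ' (x + θ * w)⟫
      = ⟪γ' x, h' (x + θ * w)⟫ := by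
    intro θ
    rw [inner_sub_right, real_inner_comm,
      real_inner_comm (γ' (x + θ * w)) (h' (x + θ * w)), horth, sub_zero]
  calc ⟪h (x + w) - h x - ⟪γ' x, γ (x + w) - γ x⟫ • h' x, γ' x⟫
      = ⟪h (x + w), γ' x⟫ - ⟪h x, γ' x⟫ := by
        rw [inner_sub_left, inner_sub_left, real_inner_smul_left, h0]; ring
    _ = f 1 - f 0 := by
        simp only [hf]
        norm_num [real_inner_comm (γ' x)]
    _ = ∫ θ in (0:ℝ)..1, w * ⟪γ' x, h' (x + θ * w)⟫ := hint.symm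
    _ = w * ∫ θ in (0:ℝ)..1, ⟪γ' x, h' (x + θ * w)⟫ :=
        intervalIntegral.integral_const_mul _ _
    _ = w * ∫ θ in (0:ℝ)..1, ⟪h' (x + θ * w), γ' x - γ' (x + θ * w)⟫ := by
        simp_rw [hrhs]
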